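/- If $I \subset [0,1]$ satisfies the DCC, then the set $D(I) = \{ (m - 1 + f)/m \mid m \in \mathbb{Z}_{>0},\ f \in I_+ \}$ satisfies the DCC. -/

import Mathlib

def SatisfiesDCC (S : Set ℝ) : Prop :=
  ¬ ∃ f : ℕ → ℝ, (∀ n, f n ∈ S) ∧ ∀ n, f (n + 1) < f n

def SatisfiesACC (S : Set ℝ) : Prop :=
  ¬ ∃ f : ℕ → ℝ, (∀ n, f n ∈ S) ∧ ∀ n, f n < f (n + 1)

def IPlus (I : Set ℝ) : Set ℝ :=
  {0} ∪ {j | j ∈ Set.Icc (0 : ℝ) 1 ∧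
    ∃ l : List ℝ, l ≠ [] ∧ (∀ x ∈ l, x ∈ I) ∧ l.sum = j}

def DSet (I : Set ℝ) : Set ℝ :=
  {a | ∃ m : ℕ, 0 < m ∧ ∃ f ∈ IPlus I, a = (m - 1 + f) / m}

lemma isWF_of_dcc {S : Set ℝ} (h : SatisfiesDCC S) : S.IsWF := by
  rw [Set.IsWF, Set.wellFoundedOn_iff_no_descending_seq]
  intro f hf
  exact h ⟨f, hf, fun n => f.map_rel_iff.2 (Nat.lt_succ_self n)⟩

lemma dcc_of_isWF {S : Set ℝ} (h : S.IsWF) : SatisfiesDCC S := by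
  rintro ⟨f, hf, hdec⟩
  have hanti : StrictAnti f := strictAnti_nat_of_succ_lt hdec
  rw [Set.IsWF, Set.wellFoundedOn_iff_no_descending_seq] at h
  exact h ⟨⟨f, hanti.injective⟩, fun {a b} => hanti.lt_iff_gt⟩ hf

lemma iplus_mem_Icc {I : Set ℝ} (hI : I ⊆ Set.Icc 0 1) {x : ℝ}
    (hx : x ∈ IPlus I) : x ∈ Set.Icc (0 : ℝ) 1 := by
  rcases hx with hx | hx
  · simp only [Set.mem_singleton_iff] at hx
    simp [hx]
  · exact hx.1

lemma dcc_IPlus {I : Set ℝ} (hI : I ⊆ Set.Icc 0 1)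
    (hdcc : SatisfiesDCC I) : SatisfiesDCC (IPlus I) := by
  have hwf : I.IsWF := isWF_of_dcc hdcc
  have hpwo : (IPlus I).IsPWO := by
    refine Set.IsPWO.mono (Set.IsPWO.addSubmonoid_closure
      (fun x hx => (hI hx).1) hwf.isPWO) ?_
    rintro x (hx | ⟨-, l, -, hl, hsum⟩)
    · simp only [Set.mem_singleton_iff] at hx
      subst hx
      exact AddSubmonoid.zero_mem _
    · rw [SetLike.mem_coe, ← hsum]
      exact AddSubmonoid.list_sum_mem _
        (fun x hx => AddSubmonoid.subset_closure (hl x hx))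
  exact dcc_of_isWF hpwo.isWF

theorem dcc_DSet (I : Set ℝ) (hI : I ⊆ Set.Icc 0 1)
    (hdcc : SatisfiesDCC I) : SatisfiesDCC (DSet I) := by
  have hplus := dcc_IPlus hI hdcc
  rintro ⟨f, hf, hdec⟩
  have hanti : StrictAnti f := strictAnti_nat_of_succ_lt hdec
  simp only [DSet, Set.mem_setOf_eq] at hf
  choose m hm g hg hfeq using hf
  have hmpos : ∀ n, (0 : ℝ) < m n := fun n => by exact_mod_cast hm n
  -- bounds on f
  have hfle1 : ∀ n, f n ≤ 1 := by
    intro n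
    rw [hfeq n, div_le_one (hmpos n)]
    linarith [(iplus_mem_Icc hI (hg n)).2]
  have hflb : ∀ n, 1 - 1 / (m n : ℝ) ≤ f n := by
    intro n
    rw [hfeq n, le_div_iff₀ (hmpos n)]
    have h0 := (iplus_mem_Icc hI (hg n)).1
    have hne : (m n : ℝ) ≠ 0 := ne_of_gt (hmpos n)
    have hexp : (1 - 1 / (m n : ℝ)) * m n = m n - 1 := by field_simp
    linarith
  set c : ℝ := f 1 with hc
  have hc1 : c < 1 := lt_of_lt_of_le (hdec 0) (hfle1 0)
  have hclt : ∀ n, f (n + 2) < c := by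
    intro n
    calc f (n + 2) ≤ f 2 := hanti.antitone (by omega)
    _ < f 1 := hdec 1
  have hbound : ∀ n, m (n + 2) < ⌈1 / (1 - c)⌉₊ := by
    intro n
    rw [Nat.lt_ceil]
    have h1 : 1 - 1 / (m (n + 2) : ℝ) < c := lt_of_le_of_lt (hflb _) (hclt n)
    have h2 : (0 : ℝ) < 1 - c := by linarith
    rw [lt_div_iff₀ h2]
    have h3 : 1 - c < 1 / (m (n + 2) : ℝ) := by linarith
    have := (lt_div_iff₀' (hmpos (n + 2))).1 h3
    linarith
  -- pigeonhole
  set B := ⌈1 / (1 - c)⌉₊ with hB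
  have hBpos : 0 < B := lt_of_le_of_lt (Nat.zero_le _) (hbound 0)
  let F : ℕ → Fin B := fun n => ⟨m (n + 2), hbound n⟩
  obtain ⟨M, hM⟩ := Finite.exists_infinite_fiber F
  have hinf : {n : ℕ | m (n + 2) = M.val}.Infinite := by
    have h1 : (F ⁻¹' {M}).Infinite := Set.infinite_coe_iff.mp hM
    refine h1.mono ?_
    intro n hn
    simpa [F, Fin.ext_iff] using hn
  set p : ℕ → Prop := fun n => m (n + 2) = M.val with hp
  have hnth_mem : ∀ k, m (Nat.nth p k + 2) = M.val := fun k =>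
    Nat.nth_mem_of_infinite hinf k
  have hnth_mono : StrictMono (Nat.nth p) := Nat.nth_strictMono hinf
  have hMpos : (0 : ℝ) < M.val := by
    have := hmpos (Nat.nth p 0 + 2)
    rwa [hnth_mem 0] at this
  -- the subsequence of g's
  set G : ℕ → ℝ := fun k => g (Nat.nth p k + 2) with hG
  refine hplus ⟨G, fun k => hg _, fun k => ?_⟩
  have heq : ∀ k, G k = M.val * f (Nat.nth p k + 2) - (M.val - 1) := by
    intro k
    have h1 := hfeq (Nat.nth p k + 2)
    rw [hnth_mem k] at h1
    have : (M.val : ℝ) ≠ 0 := ne_of_gt hMpos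
    field_simp at h1
    simp only [hG]
    linarith
  rw [heq k, heq (k + 1)]
  have hlt : f (Nat.nth p (k + 1) + 2) < f (Nat.nth p k + 2) := by
    apply hanti
    simp only [add_lt_add_iff_right]
    exact hnth_mono (Nat.lt_succ_self k)
  nlinarith
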